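/- Let d, e ∈ ℝ with d² + e² ≠ 0, set n = (e, d)/√(d² + e²) ∈ ℝ², and let ρ ∈ ℝ. Then diag(1 − d, 1 − e) + diag(d, e)·(I₂ + (ρ − 1)·n nᵗ) = I₂ + (ρ − 1)·A₁, where A₁ = (de/(d² + e²))·[[e, d], [e, d]]. Equivalently, with Q the orthogonal matrix whose rows are t = (−n₂, n₁) and n, and Λ = diag(1, ρ), one has diag(1 − d, 1 − e) + diag(d, e)·Qᵗ Λ Q = I₂ + (ρ − 1)·A₁. -/

import Mathlib

noncomputable section

/-- Case 1 interface triangle: with `n = (e, d)/√(d² + e²)` one has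
`diag(1-d, 1-e) + diag(d, e) (I₂ + (ρ-1) n nᵗ) = I₂ + (ρ-1) A₁`, where
`A₁ = (de/(d²+e²)) [[e, d], [e, d]]`. -/
theorem case_one_interpolation_matrix_identity
    (d e : ℝ) (h : d ^ 2 + e ^ 2 ≠ 0) (ρ : ℝ)
    (n : Fin 2 → ℝ)
    (hn : n = ![e / Real.sqrt (d ^ 2 + e ^ 2), d / Real.sqrt (d ^ 2 + e ^ 2)])
    (A₁ : Matrix (Fin 2) (Fin 2) ℝ)
    (hA₁ : A₁ = (d * e / (d ^ 2 + e ^ 2)) • !![e, d; e, d]) :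
    !![1 - d, 0; 0, 1 - e] + !![d, 0; 0, e] * (1 + (ρ - 1) • Matrix.vecMulVec n n) =
      1 + (ρ - 1) • A₁ := by
  have hpos : (0:ℝ) < d ^ 2 + e ^ 2 := lt_of_le_of_ne (by positivity) (Ne.symm h)
  have hs : Real.sqrt (d ^ 2 + e ^ 2) * Real.sqrt (d ^ 2 + e ^ 2) = d ^ 2 + e ^ 2 :=
    Real.mul_self_sqrt hpos.le
  have hsne : Real.sqrt (d ^ 2 + e ^ 2) ≠ 0 := by positivity
  subst hn hA₁
  ext i j
  fin_cases i <;> fin_cases j <;>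
    simp [Matrix.mul_apply, Matrix.vecMulVec, Matrix.one_apply, Fin.sum_univ_two,
      Matrix.smul_apply, Matrix.add_apply, Matrix.vecMul, dotProduct,
      Matrix.of_apply, Pi.smul_apply, smul_eq_mul] <;>
    field_simp <;> ring_nf <;> rw [Real.sq_sqrt (by positivity)] <;> ring
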